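/- (Theorem 3, optimality direction) Suppose there exists a measurable selection a : W → 𝒳 for g, let P_s ∈ 𝒫, let I be a causal essential set for g, let φ : W → Z be a measurable pointwise conditional-risk minimizer, and set h_s := φ ∘ g. Then h_s satisfies the invariance constraint h_s ∘ T = h_s for every T ∈ I, and for every measurable model h : 𝒳 → Z satisfying h ∘ T = h for all T ∈ I one has E_{P_s}[L(h(X), Y)] ≥ E_{P_s}[L(h_s(X), Y)]; that is, h_s minimizes the risk under P_s over all measurable models invariant to the causal essential set. -/

import Mathlib

open MeasureTheory ENNReal

variable {𝒳 W U 𝒴 Z : Type*} [MeasurableSpace 𝒳] [MeasurableSpace W]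
  [MeasurableSpace U] [MeasurableSpace 𝒴] [MeasurableSpace Z]

/-- `κ` is a coupling (the joint law of `(X, η)`) witnessing that `P` belongs to the
class `𝒫`: `κ` is a probability measure, the pushforward of `κ` under
`(x, u) ↦ (g x, u)` equals `(g_*ν) ⊗ F` where `ν` is the first marginal of `κ`
(encoding `η ∼ F` and `η ⟂ g(X)`), and `P` is the pushforward of `κ` under
`(x, u) ↦ (x, m (g x, u))` (encoding `Y = m(g(X), η)`). -/
def IsCouplingFor (g : 𝒳 → W) (m : W × U → 𝒴) (F : Measure U)
    (κ : Measure (𝒳 × U)) (P : Measure (𝒳 × 𝒴)) : Prop :=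
  IsProbabilityMeasure κ ∧
    κ.map (fun p : 𝒳 × U => (g p.1, p.2)) = ((κ.map Prod.fst).map g).prod F ∧
    P = κ.map (fun p : 𝒳 × U => (p.1, m (g p.1, p.2)))

/-- The class `𝒫` of distributions generated by the structural causal model. -/
def MemP (g : 𝒳 → W) (m : W × U → 𝒴) (F : Measure U) (P : Measure (𝒳 × 𝒴)) : Prop :=
  ∃ κ : Measure (𝒳 × U), IsCouplingFor g m F κ P

/-- The risk `E_P[L(h(X), Y)]` of a model `h` under the distribution `P`. -/
noncomputable def risk (L : Z × 𝒴 → ℝ≥0∞) (h : 𝒳 → Z) (P : Measure (𝒳 × 𝒴)) : ℝ≥0∞ :=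
  ∫⁻ p, L (h p.1, p.2) ∂P

/-- `φ : W → Z` is a pointwise conditional-risk minimizer: for every `w` and every `z`,
`∫⁻ L(φ w, m (w, u)) dF(u) ≤ ∫⁻ L(z, m (w, u)) dF(u)`. -/
def IsPointwiseCondRiskMin (L : Z × 𝒴 → ℝ≥0∞) (m : W × U → 𝒴) (F : Measure U)
    (φ : W → Z) : Prop :=
  ∀ (w : W) (z : Z), ∫⁻ u, L (φ w, m (w, u)) ∂F ≤ ∫⁻ u, L (z, m (w, u)) ∂F

/-- A family `I` of transformations `T : X → X` is a causal essential set for `h` if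
`h ∘ T = h` for every `T ∈ I`, and for all `x₁, x₂` with `h x₁ = h x₂` there are finitely
many `T₁, …, T_K ∈ I` such that `(T₁ ∘ ⋯ ∘ T_K) x₁ = x₂`. -/
def IsCausalEssentialSet {X V : Type*} (h : X → V) (I : Set (X → X)) : Prop :=
  (∀ T ∈ I, h ∘ T = h) ∧
    ∀ x₁ x₂ : X, h x₁ = h x₂ →
      ∃ l : List (X → X), (∀ T ∈ l, T ∈ I) ∧ l.foldr (· ∘ ·) id x₁ = x₂

/-- Theorem 3, optimality direction: under a measurable selection for `g`, `P_s ∈ 𝒫`, a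
causal essential set `I` for `g`, and `h_s = φ ∘ g` for a measurable pointwise
conditional-risk minimizer `φ`, the model `h_s` is invariant to every `T ∈ I` and
minimizes the risk under `P_s` over all measurable models invariant to `I`. -/
theorem stmt_10 (g : 𝒳 → W) (hg : Measurable g) (m : W × U → 𝒴) (hm : Measurable m)
    (F : Measure U) [IsProbabilityMeasure F] (L : Z × 𝒴 → ℝ≥0∞) (hL : Measurable L)
    (a : W → 𝒳) (ha : Measurable a) (hsel : ∀ x : 𝒳, g (a (g x)) = g x)
    (P_s : Measure (𝒳 × 𝒴)) (hPs : MemP g m F P_s)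
    (I : Set (𝒳 → 𝒳)) (hI : IsCausalEssentialSet g I)
    (φ : W → Z) (hφ : Measurable φ) (hmin : IsPointwiseCondRiskMin L m F φ) :
    (∀ T ∈ I, (φ ∘ g) ∘ T = φ ∘ g) ∧
      ∀ h : 𝒳 → Z, Measurable h → (∀ T ∈ I, h ∘ T = h) →
        risk L (φ ∘ g) P_s ≤ risk L h P_s := by
  obtain ⟨κ, hκprob, hκmap, hPeq⟩ := hPs
  have hfold : ∀ (h : 𝒳 → Z), (∀ T ∈ I, h ∘ T = h) →
      ∀ (l : List (𝒳 → 𝒳)), (∀ T ∈ l, T ∈ I) → ∀ x : 𝒳,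
        h (l.foldr (· ∘ ·) id x) = h x := by
    intro h hinv l
    induction l with
    | nil => intro _ x; rfl
    | cons T t ih =>
      intro hmem x
      have hT : h ∘ T = h := hinv T (hmem T List.mem_cons_self)
      have : h (T (t.foldr (· ∘ ·) id x)) = h (t.foldr (· ∘ ·) id x) :=
        congrFun hT _
      simpa [this] using ih (fun T hT => hmem T (List.mem_cons_of_mem _ hT)) x
  -- factorization: invariant h factors through g via a
  have hfact : ∀ (h : 𝒳 → Z), (∀ T ∈ I, h ∘ T = h) → ∀ x : 𝒳, h x = h (a (g x)) := by
    intro h hinv x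
    obtain ⟨l, hlI, hlx⟩ := hI.2 x (a (g x)) (by rw [hsel x])
    rw [← hlx, hfold h hinv l hlI x]
  -- key risk formula: risk of any invariant measurable h
  have key : ∀ (h : 𝒳 → Z), Measurable h → (∀ T ∈ I, h ∘ T = h) →
      risk L h P_s =
        ∫⁻ w, ∫⁻ u, L (h (a w), m (w, u)) ∂F ∂((κ.map Prod.fst).map g) := by
    intro h hmeas hinv
    have h1 : Measurable (fun p : 𝒳 × 𝒴 => L (h p.1, p.2)) :=
      hL.comp ((hmeas.comp measurable_fst).prodMk measurable_snd)
    have h2 : Measurable (fun p : 𝒳 × U => (p.1, m (g p.1, p.2))) :=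
      measurable_fst.prodMk (hm.comp ((hg.comp measurable_fst).prodMk measurable_snd))
    have h3 : Measurable (fun p : 𝒳 × U => (g p.1, p.2)) :=
      (hg.comp measurable_fst).prodMk measurable_snd
    have h4 : Measurable (fun q : W × U => L (h (a q.1), m q)) :=
      hL.comp (((hmeas.comp ha).comp measurable_fst).prodMk hm)
    haveI : IsProbabilityMeasure κ := hκprob
    haveI : IsFiniteMeasure ((κ.map Prod.fst).map g) := by
      haveI : IsProbabilityMeasure (κ.map Prod.fst) :=
        Measure.isProbabilityMeasure_map measurable_fst.aemeasurable
      exact by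
        haveI : IsProbabilityMeasure ((κ.map Prod.fst).map g) :=
          Measure.isProbabilityMeasure_map hg.aemeasurable
        infer_instance
    calc risk L h P_s = ∫⁻ p : 𝒳 × U, L (h p.1, m (g p.1, p.2)) ∂κ := by
          rw [risk, hPeq, lintegral_map h1 h2]
      _ = ∫⁻ p : 𝒳 × U, L (h (a (g p.1)), m (g p.1, p.2)) ∂κ := by
          congr 1; funext p; rw [← hfact h hinv p.1]
      _ = ∫⁻ q : W × U, L (h (a q.1), m q) ∂(κ.map (fun p : 𝒳 × U => (g p.1, p.2))) := by
          rw [lintegral_map h4 h3]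
      _ = ∫⁻ q : W × U, L (h (a q.1), m q) ∂(((κ.map Prod.fst).map g).prod F) := by
          rw [hκmap]
      _ = ∫⁻ w, ∫⁻ u, L (h (a w), m (w, u)) ∂F ∂((κ.map Prod.fst).map g) := by
          rw [lintegral_prod _ h4.aemeasurable]
  have hinv_s : ∀ T ∈ I, (φ ∘ g) ∘ T = φ ∘ g := by
    intro T hT
    rw [Function.comp_assoc, hI.1 T hT]
  refine ⟨hinv_s, fun h hmeas hinv => ?_⟩
  rw [key h hmeas hinv, key (φ ∘ g) (hφ.comp hg) hinv_s]
  have hm1 : Measurable (fun w : W => ∫⁻ u, L (φ (g (a w)), m (w, u)) ∂F) :=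
    (hL.comp ((((hφ.comp hg).comp ha).comp measurable_fst).prodMk hm)).lintegral_prod_right'
  have hm2 : Measurable (fun w : W => ∫⁻ u, L (h (a w), m (w, u)) ∂F) :=
    (hL.comp (((hmeas.comp ha).comp measurable_fst).prodMk hm)).lintegral_prod_right'
  simp only [Function.comp_apply]
  rw [lintegral_map hm1 hg, lintegral_map hm2 hg]
  refine lintegral_mono fun x => ?_
  simp only [hsel x]
  exact hmin (g x) (h (a (g x)))
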